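/- arXiv:1710.08068 — 2 statements merged into one kernel-verified Lean document; each statement's English description precedes it below -/
import Mathlib

section
/- Let B be an abelian category in which every object is noetherian, and let C be a full, replete subcategory containing 0 that is closed under extensions and under quotients. Then (C, C⊥) is a torsion pair on B, where C⊥ is the full subcategory of objects N with Hom_B(C',N) = 0 for all C' ∈ C. In particular, for every object M of B there is a short exact sequence 0 → X → M → Y → 0 with X ∈ C and Hom_B(C',Y) = 0 for all C' ∈ C. -/
/-!
Common set-up: Rosenberg's spectrum of an abelian category.

For objects `X Y` of an abelian category `C`, `X ≺ Y` means that `X` is a subquotient of a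
finite direct sum of copies of `Y`; `X ≈ Y` means `X ≺ Y ≺ X`.  A nonzero object `P` is
*spectral* if it is `≈`-equivalent to each of its nonzero subobjects, and the spectrum
`𝔖pec(C)` is the collection of `≈`-equivalence classes `⟨P⟩` of spectral objects.
`Supp(M) = {⟨P⟩ : P ≺ M}` and `Ass(M) = {⟨P⟩ : some spectral object of class ⟨P⟩ embeds in M}`.
-/

open CategoryTheory CategoryTheory.Limits

attribute [local instance] CategoryTheory.Abelian.hasFiniteBiproducts
attribute [local instance] CategoryTheory.Limits.hasBinaryBiproducts_of_finite_biproducts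

universe v u

namespace RosenbergSpec

variable (C : Type u) [Category.{v} C] [Abelian C]

/-- `X ≺ Y` : `X` is a subquotient of a finite direct sum of copies of `Y`. -/
def Prec (X Y : C) : Prop :=
  ∃ n : ℕ, 0 < n ∧ ∃ (S : C) (ι : S ⟶ ⨁ (fun _ : Fin n => Y)) (π : S ⟶ X),
    Mono ι ∧ Epi π

/-- `X ≈ Y` : mutual subquotient equivalence. -/
def PrecEquiv (X Y : C) : Prop := Prec C X Y ∧ Prec C Y X

/-- A nonzero object is spectral if it is `≈`-equivalent to each of its nonzero subobjects. -/
def IsSpectral (P : C) : Prop :=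
  ¬ IsZero P ∧ ∀ (Q : C) (f : Q ⟶ P), Mono f → ¬ IsZero Q → PrecEquiv C Q P

/-- The type of spectral objects of `C`. -/
def SpectralObj := {P : C // IsSpectral C P}

/-- The spectrum `𝔖pec(C)` : equivalence classes `⟨P⟩` of spectral objects. -/
def SpecPoint := Quot (fun P Q : SpectralObj C => PrecEquiv C P.1 Q.1)

/-- The point `⟨P⟩` of the spectrum attached to a spectral object `P`. -/
def pt (P : SpectralObj C) : SpecPoint C := Quot.mk _ P

/-- `Supp(M) = {⟨P⟩ : P spectral, P ≺ M}`. -/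
def supp (M : C) : Set (SpecPoint C) :=
  {x | ∃ P : SpectralObj C, pt C P = x ∧ Prec C P.1 M}

/-- `Ass(M) = {⟨P⟩ : some spectral object of class ⟨P⟩ is a subobject of M}`. -/
def ass (M : C) : Set (SpecPoint C) :=
  {x | ∃ P : SpectralObj C, pt C P = x ∧ ∃ f : P.1 ⟶ M, Mono f}

/-- A subset of the spectrum is specialization closed if together with any point `⟨P⟩`
it contains all of `Supp(P)`. -/
def SpecializationClosed (S : Set (SpecPoint C)) : Prop :=
  ∀ P : SpectralObj C, pt C P ∈ S → supp C P.1 ⊆ S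

/-- Every nonzero object of `C` has an associated point. -/
def HasAssociatedPoints : Prop :=
  ∀ M : C, ¬ IsZero M → (ass C M).Nonempty

/-- A Grothendieck category is locally noetherian if it admits a small generating family
of noetherian objects. -/
def LocallyNoetherian : Prop :=
  ∃ (ι : Type v) (G : ι → C), ObjectProperty.IsSeparating (ObjectProperty.ofObj G) ∧ ∀ i, IsNoetherianObject (G i)

/-- `0 ⟶ X ⟶ M ⟶ Y ⟶ 0` is a short exact sequence. -/
def IsShortExact {X M Y : C} (f : X ⟶ M) (g : M ⟶ Y) : Prop :=
  ∃ w : f ≫ g = 0, (ShortComplex.mk f g w).ShortExact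

/-- `f : N ⟶ M` exhibits `N` as an essential subobject of `M`. -/
def IsEssential {N M : C} (f : N ⟶ M) : Prop :=
  Mono f ∧ ∀ (K : C) (g : K ⟶ M), Mono g → ¬ IsZero K → ¬ IsZero (pullback f g)

/-- `i : P ⟶ E` exhibits `E` as an injective hull of `P`. -/
def IsInjectiveHull {P E : C} (i : P ⟶ E) : Prop :=
  Injective E ∧ IsEssential C i

/-- A torsion pair `(T, F)` on an abelian category: both classes are replete, all maps from
`T` to `F` vanish, and every object is an extension of an object of `F` by an object of `T`. -/
structure IsTorsionPair (T F : Set C) : Prop where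
  repleteT : ∀ X Y : C, X ∈ T → Nonempty (X ≅ Y) → Y ∈ T
  repleteF : ∀ X Y : C, X ∈ F → Nonempty (X ≅ Y) → Y ∈ F
  hom_zero : ∀ X ∈ T, ∀ Y ∈ F, ∀ f : X ⟶ Y, f = 0
  exists_ses : ∀ M : C, ∃ (X Y : C) (f : X ⟶ M) (g : M ⟶ Y),
    IsShortExact C f g ∧ X ∈ T ∧ Y ∈ F

end RosenbergSpec

namespace RosenbergSpec

/-- Let `B` be an abelian category in which every object is noetherian and
let `𝒞` be a full, replete subcategory containing `0`, closed under extensions and under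
quotients.  Then `(𝒞, 𝒞⊥)` is a torsion pair on `B`, where
`𝒞⊥ = {N : Hom(C', N) = 0 for all C' ∈ 𝒞}`.  (In particular every object `M` fits in a
short exact sequence `0 ⟶ X ⟶ M ⟶ Y ⟶ 0` with `X ∈ 𝒞` and `Hom(C', Y) = 0` for all
`C' ∈ 𝒞`.) -/
theorem torsion_pair_of_extension_quotient_closed
    (B : Type u) [Category.{v} B] [Abelian B]
    (hnoeth : ∀ X : B, IsNoetherianObject X)
    (𝒞 : Set B)
    (hrep : ∀ X Y : B, X ∈ 𝒞 → Nonempty (X ≅ Y) → Y ∈ 𝒞)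
    (hzero : ∀ Z : B, IsZero Z → Z ∈ 𝒞)
    (hext : ∀ (X M Y : B) (f : X ⟶ M) (g : M ⟶ Y),
      IsShortExact B f g → X ∈ 𝒞 → Y ∈ 𝒞 → M ∈ 𝒞)
    (hquot : ∀ (X Y : B) (f : X ⟶ Y), Epi f → X ∈ 𝒞 → Y ∈ 𝒞) :
    IsTorsionPair B 𝒞 {N : B | ∀ X ∈ 𝒞, ∀ f : X ⟶ N, f = 0} := by
  constructor
  · exact hrep
  · rintro X Y hX ⟨e⟩
    intro C' hC' f
    have : f = (f ≫ e.inv) ≫ e.hom := by simp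
    rw [this, hX C' hC' (f ≫ e.inv), zero_comp]
  · intro X hX Y hY f
    exact hY X hX f
  · intro M
    have hwf : WellFounded ((· > ·) : Subobject M → Subobject M → Prop) := by
      haveI := hnoeth M; exact wellFounded_gt
    have hbot : ((⊥ : Subobject M) : B) ∈ 𝒞 :=
      hzero _ (IsZero.of_iso (isZero_zero B) Subobject.botCoeIsoZero)
    obtain ⟨A, hA, hmax⟩ := hwf.has_min {A : Subobject M | (A : B) ∈ 𝒞} ⟨⊥, hbot⟩
    refine ⟨(A : B), cokernel A.arrow, A.arrow, cokernel.π A.arrow,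
      ⟨cokernel.condition A.arrow, ?_⟩, hA, ?_⟩
    · exact { exact := ShortComplex.exact_of_g_is_cokernel _ (cokernelIsCokernel A.arrow) }
    · intro C' hC' φ
      by_contra hφ
      set g := cokernel.π A.arrow with hg
      set m := image.ι φ with hm
      have hI : image φ ∈ 𝒞 := hquot _ _ (factorThruImage φ) inferInstance hC'
      -- the pullback of the image along g
      set fst := pullback.fst g m with hfst
      set snd := pullback.snd g m with hsnd
      have hAg : A.arrow ≫ g = 0 := cokernel.condition A.arrow
      have hlw : A.arrow ≫ g = (0 : (A : B) ⟶ image φ) ≫ m := by simp [hAg]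
      set l : (A : B) ⟶ pullback g m := pullback.lift A.arrow 0 hlw with hl
      have hlfst : l ≫ fst = A.arrow := pullback.lift_fst _ _ _
      have hlsnd : l ≫ snd = 0 := pullback.lift_snd _ _ _
      have hle : A ≤ Subobject.mk fst := by
        conv_lhs => rw [← Subobject.mk_arrow A]
        exact Subobject.mk_le_mk_of_comm l hlfst
      -- kernel of snd is isomorphic to A
      have hkg : (kernel.ι snd ≫ fst) ≫ g = 0 := by
        rw [Category.assoc, pullback.condition, ← Category.assoc, kernel.condition, zero_comp]
      set u : kernel snd ⟶ (A : B) := Abelian.monoLift A.arrow (kernel.ι snd ≫ fst) hkg with hu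
      have huf : u ≫ A.arrow = kernel.ι snd ≫ fst := Abelian.monoLift_comp _ _ _
      set v : (A : B) ⟶ kernel snd := kernel.lift snd l hlsnd with hv
      have hvk : v ≫ kernel.ι snd = l := kernel.lift_ι _ _ _
      have hmono : Mono (kernel.ι snd ≫ fst) := mono_comp _ _
      have hul : u ≫ l = kernel.ι snd := by
        have : (u ≫ l) ≫ fst = kernel.ι snd ≫ fst := by
          rw [Category.assoc, hlfst, huf]
        exact (cancel_mono fst).mp this
      have huv : u ≫ v = 𝟙 _ := by
        have : (u ≫ v) ≫ kernel.ι snd = 𝟙 _ ≫ kernel.ι snd := by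
          rw [Category.assoc, hvk, hul, Category.id_comp]
        exact (cancel_mono (kernel.ι snd)).mp this
      have hvu : v ≫ u = 𝟙 _ := by
        have : (v ≫ u) ≫ A.arrow = 𝟙 _ ≫ A.arrow := by
          rw [Category.assoc, huf, ← Category.assoc, hvk, hlfst, Category.id_comp]
        exact (cancel_mono A.arrow).mp this
      have hker : kernel snd ∈ 𝒞 :=
        hrep _ _ hA ⟨⟨v, u, hvu, huv⟩⟩
      -- the pullback is in 𝒞
      have hP : pullback g m ∈ 𝒞 := by
        refine hext _ _ _ (kernel.ι snd) snd ⟨kernel.condition snd, ?_⟩ hker hI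
        exact { exact := ShortComplex.exact_of_f_is_kernel _ (kernelIsKernel snd) }
      have hmem : Subobject.mk fst ∈ {A : Subobject M | (A : B) ∈ 𝒞} :=
        hrep _ _ hP ⟨(Subobject.underlyingIso fst).symm⟩
      have heq : A = Subobject.mk fst := by
        rcases hle.lt_or_eq with h | h
        · exact absurd h (hmax _ hmem)
        · exact h
      have hfstg : fst ≫ g = 0 := by
        have h1 : (Subobject.mk fst).arrow ≫ g = 0 := by rw [← heq]; exact hAg
        have h2 : (Subobject.underlyingIso fst).inv ≫ (Subobject.mk fst).arrow = fst :=
          Subobject.underlyingIso_arrow fst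
        rw [← h2, Category.assoc, h1, comp_zero]
      have hsndm : snd ≫ m = 0 := by rw [← pullback.condition, hfstg]
      have hsnd0 : snd = 0 := by
        have : Mono m := inferInstance
        exact (cancel_mono m).mp (by rw [hsndm, zero_comp])
      haveI : Epi (0 : pullback g m ⟶ image φ) := hsnd0 ▸ inferInstance
      have hIz : IsZero (image φ) := IsZero.of_epi_zero (pullback g m) (image φ)
      have : φ = 0 := by
        rw [← image.fac φ, show image.ι φ = 0 from hIz.eq_zero_of_src _, comp_zero]
      exact hφ this


end RosenbergSpec
end

section
/- Let A be a locally noetherian Grothendieck category. Then every finitely generated object M of A has only finitely many associated points, i.e., Ass(M) is a finite set. -/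
/-!
Common set-up: Rosenberg's spectrum of an abelian category.

For objects `X Y` of an abelian category `C`, `X ≺ Y` means that `X` is a subquotient of a
finite direct sum of copies of `Y`; `X ≈ Y` means `X ≺ Y ≺ X`.  A nonzero object `P` is
*spectral* if it is `≈`-equivalent to each of its nonzero subobjects, and the spectrum
`𝔖pec(C)` is the collection of `≈`-equivalence classes `⟨P⟩` of spectral objects.
`Supp(M) = {⟨P⟩ : P ≺ M}` and `Ass(M) = {⟨P⟩ : some spectral object of class ⟨P⟩ embeds in M}`.
-/

open CategoryTheory CategoryTheory.Limits

attribute [local instance] CategoryTheory.Abelian.hasFiniteBiproducts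
attribute [local instance] CategoryTheory.Limits.hasBinaryBiproducts_of_finite_biproducts

universe v u

namespace RosenbergSpec

section Aux

variable {C : Type u} [Category.{v} C] [Abelian C]

/-- A monomorphism `X ⟶ Y` witnesses `X ≺ Y`. -/
lemma prec_of_mono {X Y : C} (f : X ⟶ Y) (hf : Mono f) : Prec C X Y := by
  haveI := hf
  haveI : Mono ((biproduct.lift fun _ : Fin 1 => 𝟙 Y) ≫ biproduct.π (fun _ : Fin 1 => Y) 0) := by
    rw [biproduct.lift_π]; infer_instance
  haveI : Mono (biproduct.lift fun _ : Fin 1 => 𝟙 Y) :=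
    mono_of_mono _ (biproduct.π (fun _ : Fin 1 => Y) 0)
  exact ⟨1, one_pos, X, f ≫ biproduct.lift fun _ : Fin 1 => 𝟙 Y, 𝟙 X,
    mono_comp _ _, inferInstance⟩

/-- `≺` is transitive. -/
lemma prec_trans {X Y Z : C} (h₁ : Prec C X Y) (h₂ : Prec C Y Z) : Prec C X Z := by
  obtain ⟨n, hn, S, ι, π, hι, hπ⟩ := h₁
  obtain ⟨m, hm, T, ι₂, π₂, hι₂, hπ₂⟩ := h₂
  haveI := hι; haveI := hπ; haveI := hι₂; haveI := hπ₂
  -- `p : Tⁿ ↠ Yⁿ`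
  set p : (⨁ fun _ : Fin n => T) ⟶ (⨁ fun _ : Fin n => Y) :=
    biproduct.map fun _ => π₂ with hp
  haveI : Epi p := by unfold p; infer_instance
  -- pull back `S ↪ Yⁿ` along `p`
  set W := pullback ι p with hW
  haveI : Epi (pullback.fst ι p) := by exact CategoryTheory.Abelian.epi_pullback_of_epi_g ι p
  -- `W ↪ Tⁿ ↪ (Zᵐ)ⁿ ≅ Z^{n·m}`
  set q : (⨁ fun _ : Fin n => T) ⟶ (⨁ fun _ : Fin n => ⨁ fun _ : Fin m => Z) :=
    biproduct.map fun _ => ι₂ with hq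
  haveI : Mono q := by unfold q; infer_instance
  let e₁ : (⨁ fun _ : Fin n => ⨁ fun _ : Fin m => Z) ≅
      (⨁ fun _ : Σ _ : Fin n, Fin m => Z) :=
    biproductBiproductIso (fun _ : Fin n => Fin m) (fun _ _ => Z)
  let e : (Σ _ : Fin n, Fin m) ≃ Fin (n * m) :=
    (Equiv.sigmaEquivProd (Fin n) (Fin m)).trans finProdFinEquiv
  let e₂ : (⨁ fun _ : Σ _ : Fin n, Fin m => Z) ≅ (⨁ fun _ : Fin (n * m) => Z) :=
    biproduct.whiskerEquiv e fun _ => Iso.refl Z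
  refine ⟨n * m, Nat.mul_pos hn hm, W,
    pullback.snd ι p ≫ q ≫ e₁.hom ≫ e₂.hom, pullback.fst ι p ≫ π, ?_, ?_⟩
  · haveI : Mono (e₁.hom ≫ e₂.hom) := mono_comp _ _
    haveI : Mono (q ≫ e₁.hom ≫ e₂.hom) := by rw [← Category.assoc]; exact mono_comp _ _
    exact mono_comp _ _
  · exact epi_comp _ _

lemma precEquiv_symm {X Y : C} (h : PrecEquiv C X Y) : PrecEquiv C Y X := ⟨h.2, h.1⟩

lemma precEquiv_trans {X Y Z : C} (h₁ : PrecEquiv C X Y) (h₂ : PrecEquiv C Y Z) :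
    PrecEquiv C X Z :=
  ⟨prec_trans h₁.1 h₂.1, prec_trans h₂.2 h₁.2⟩

/-- A nonzero subobject of a spectral object is spectral, and equivalent to it. -/
lemma isSpectral_of_mono {P K : C} (hP : IsSpectral C P) (i : K ⟶ P) (hi : Mono i)
    (hK : ¬ IsZero K) : IsSpectral C K ∧ PrecEquiv C K P := by
  have hKP : PrecEquiv C K P := hP.2 K i hi hK
  refine ⟨⟨hK, fun R f hf hR => ?_⟩, hKP⟩
  haveI := hf; haveI := hi
  have hRP : PrecEquiv C R P := hP.2 R (f ≫ i) (mono_comp _ _) hR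
  exact precEquiv_trans hRP (precEquiv_symm hKP)

/-- `Ass` is monotone along monomorphisms. -/
lemma ass_subset_of_mono {X Y : C} (f : X ⟶ Y) (hf : Mono f) : ass C X ⊆ ass C Y := by
  rintro x ⟨Q, rfl, g, hg⟩
  haveI := hg; haveI := hf
  exact ⟨Q, rfl, g ≫ f, mono_comp _ _⟩

/-- `Ass(P) ⊆ {⟨P⟩}` for a spectral object `P`. -/
lemma ass_spectral_subset (P : SpectralObj C) : ass C P.1 ⊆ {pt C P} := by
  rintro x ⟨Q, rfl, f, hf⟩
  have h : PrecEquiv C Q.1 P.1 := P.2.2 Q.1 f hf Q.2.1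
  exact Quot.sound h

/-- `Ass(X ⊕ Y) ⊆ Ass(X) ∪ Ass(Y)`. -/
lemma ass_biprod_subset (X Y : C) : ass C (X ⊞ Y) ⊆ ass C X ∪ ass C Y := by
  rintro x ⟨Q, rfl, g, hg⟩
  haveI := hg
  by_cases hz : IsZero (kernel (g ≫ biprod.snd))
  · -- `Q` embeds in `Y`
    right
    have h0 : kernel.ι (g ≫ biprod.snd) = 0 := hz.eq_zero_of_src _
    have hms : Mono (g ≫ biprod.snd) := Preadditive.mono_of_kernel_zero h0
    exact ⟨Q, rfl, g ≫ biprod.snd, hms⟩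
  · -- the kernel is a nonzero subobject of `Q` embedding in `X`
    set i : kernel (g ≫ biprod.snd) ⟶ Q.1 := kernel.ι _ with hi
    obtain ⟨hspec, hequiv⟩ := isSpectral_of_mono Q.2 i inferInstance hz
    set r : kernel (g ≫ biprod.snd) ⟶ X := i ≫ g ≫ biprod.fst with hr
    have hfac : r ≫ biprod.inl = i ≫ g := by
      have h1 : (i ≫ g) ≫ biprod.snd = 0 := by
        rw [Category.assoc]; exact kernel.condition _
      have := biprod.total (X := X) (Y := Y)
      calc r ≫ biprod.inl = (i ≫ g) ≫ biprod.fst ≫ biprod.inl := by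
            simp [hr]
        _ = (i ≫ g) ≫ (biprod.fst ≫ biprod.inl + biprod.snd ≫ biprod.inr) := by
            rw [Preadditive.comp_add, ← Category.assoc, ← Category.assoc, h1, zero_comp, add_zero]
        _ = i ≫ g := by rw [this, Category.comp_id]
    haveI : Mono (i ≫ g) := mono_comp _ _
    haveI : Mono r := mono_of_mono_fac hfac
    left
    exact ⟨⟨_, hspec⟩, Quot.sound hequiv, r, inferInstance⟩

/-- Decompose a biproduct over `Fin (k+1)` as a binary biproduct. -/
noncomputable def biproductFinSuccIso (k : ℕ) (f : Fin (k + 1) → C) :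
    (⨁ f) ≅ (⨁ fun i : Fin k => f i.castSucc) ⊞ f (Fin.last k) where
  hom := biprod.lift (biproduct.lift fun i => biproduct.π f i.castSucc)
      (biproduct.π f (Fin.last k))
  inv := biprod.desc (biproduct.desc fun i => biproduct.ι f i.castSucc)
      (biproduct.ι f (Fin.last k))
  hom_inv_id := by
    rw [biprod.lift_desc, biproduct.lift_desc, ← biproduct.total, Fin.sum_univ_castSucc]
  inv_hom_id := by
    ext
    all_goals
      simp [biproduct.ι_π, Fin.castSucc_inj,
        (Fin.castSucc_lt_last _).ne, (Fin.castSucc_lt_last _).ne']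

/-- `Ass` of a finite biproduct. -/
lemma ass_fin_biproduct_subset (k : ℕ) (f : Fin k → C) :
    ass C (⨁ f) ⊆ ⋃ i, ass C (f i) := by
  induction k with
  | zero =>
    rintro x ⟨Q, rfl, g, hg⟩
    haveI := hg
    have hz : IsZero (⨁ f) := by
      rw [IsZero.iff_id_eq_zero]
      exact biproduct.hom_ext _ _ fun j => j.elim0
    exact absurd (IsZero.of_mono_eq_zero g (hz.eq_zero_of_tgt g)) Q.2.1
  | succ k ih =>
    intro x hx
    have h1 : x ∈ ass C ((⨁ fun i : Fin k => f i.castSucc) ⊞ f (Fin.last k)) :=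
      ass_subset_of_mono (biproductFinSuccIso k f).hom inferInstance hx
    rcases ass_biprod_subset _ _ h1 with h | h
    · obtain ⟨i, hi⟩ := Set.mem_iUnion.mp (ih _ h)
      exact Set.mem_iUnion.mpr ⟨i.castSucc, hi⟩
    · exact Set.mem_iUnion.mpr ⟨Fin.last k, h⟩

/-- If two subobjects intersect trivially, the map from their direct sum is mono. -/
lemma mono_biprod_desc_of_isZero_pullback {S Q M : C} (ι : S ⟶ M) (g : Q ⟶ M)
    (hι : Mono ι) (hg : Mono g) (h : IsZero (pullback ι g)) :
    Mono (biprod.desc ι g) := by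
  haveI := hι; haveI := hg
  apply Preadditive.mono_of_cancel_zero
  intro T t ht
  have key : t ≫ biprod.desc ι g = t ≫ biprod.fst ≫ ι + t ≫ biprod.snd ≫ g := by
    calc t ≫ biprod.desc ι g
        = t ≫ (biprod.fst ≫ biprod.inl + biprod.snd ≫ biprod.inr) ≫ biprod.desc ι g := by
          rw [biprod.total, Category.id_comp]
      _ = t ≫ biprod.fst ≫ ι + t ≫ biprod.snd ≫ g := by
          simp only [Preadditive.add_comp, Preadditive.comp_add, Category.assoc,
            biprod.inl_desc, biprod.inr_desc]
  rw [ht] at key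
  have hAB : t ≫ biprod.fst ≫ ι = -(t ≫ biprod.snd ≫ g) :=
    eq_neg_of_add_eq_zero_left key.symm
  have hcomm : (t ≫ biprod.fst) ≫ ι = (-(t ≫ biprod.snd)) ≫ g := by
    simpa only [Category.assoc, Preadditive.neg_comp] using hAB
  have hl := pullback.lift (f := ι) (g := g) (t ≫ biprod.fst) (-(t ≫ biprod.snd)) hcomm
  have hl0 : pullback.lift (f := ι) (g := g) (t ≫ biprod.fst) (-(t ≫ biprod.snd)) hcomm = 0 :=
    h.eq_zero_of_tgt _
  have h1 : t ≫ biprod.fst = 0 := by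
    have := pullback.lift_fst (f := ι) (g := g) (t ≫ biprod.fst) (-(t ≫ biprod.snd)) hcomm
    rw [hl0, zero_comp] at this; exact this.symm
  have h2 : t ≫ biprod.snd = 0 := by
    have := pullback.lift_snd (f := ι) (g := g) (t ≫ biprod.fst) (-(t ≫ biprod.snd)) hcomm
    rw [hl0, zero_comp] at this
    have := this.symm
    rwa [neg_eq_zero] at this
  calc t = t ≫ 𝟙 _ := by rw [Category.comp_id]
    _ = t ≫ (biprod.fst ≫ biprod.inl + biprod.snd ≫ biprod.inr) := by rw [biprod.total]
    _ = 0 := by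
      rw [Preadditive.comp_add, ← Category.assoc, ← Category.assoc, h1, h2,
        zero_comp, zero_comp, add_zero]

/-- Adding a nonzero independent piece strictly increases the subobject. -/
lemma mk_lt_mk_desc {S Q M : C} (ι : S ⟶ M) (g : Q ⟶ M) (hι : Mono ι)
    (hQ : ¬ IsZero Q) (hm : Mono (biprod.desc ι g)) :
    Subobject.mk ι < Subobject.mk (biprod.desc ι g) := by
  haveI := hι; haveI := hm
  have hle : Subobject.mk ι ≤ Subobject.mk (biprod.desc ι g) :=
    Subobject.mk_le_mk_of_comm biprod.inl (biprod.inl_desc _ _)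
  rcases hle.lt_or_eq with h | h
  · exact h
  · exfalso
    let u := Subobject.isoOfMkEqMk ι (biprod.desc ι g) h
    have hu : u.hom ≫ biprod.desc ι g = ι := Subobject.ofMkLEMk_comp h.le
    have hinl : u.hom = biprod.inl := by
      rw [← cancel_mono (biprod.desc ι g), hu, biprod.inl_desc]
    have hsnd : (biprod.snd : S ⊞ Q ⟶ Q) = 0 := by
      calc (biprod.snd : S ⊞ Q ⟶ Q) = (u.inv ≫ u.hom) ≫ biprod.snd := by
            rw [u.inv_hom_id, Category.id_comp]
        _ = u.inv ≫ biprod.inl ≫ biprod.snd := by rw [hinl, Category.assoc]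
        _ = 0 := by rw [biprod.inl_snd, comp_zero]
    apply hQ
    rw [IsZero.iff_id_eq_zero, ← biprod.inr_snd (X := S) (Y := Q), hsnd, comp_zero]

end Aux

/-- Let `A` be a locally noetherian Grothendieck category.  Then every
finitely generated (= noetherian) object `M` of `A` has only finitely many associated
points : `Ass(M)` is a finite set. -/
theorem ass_finite_of_noetherian
    (A : Type u) [Category.{v} A] [Abelian A] [HasColimits A] [AB5 A]
    (hln : LocallyNoetherian A)
    (M : A) (hM : IsNoetherianObject M) :
    (ass A M).Finite := by
  classical
  let 𝒯 : Set (Subobject M) := {N | ∃ (k : ℕ) (P : Fin k → SpectralObj A)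
    (ι : (⨁ fun i => (P i).1) ⟶ M) (hι : Mono ι), N = @Subobject.mk A _ M _ ι hι}
  have hz0 : IsZero (⨁ fun i : Fin 0 => ((Fin.elim0 : Fin 0 → SpectralObj A) i).1) := by
    rw [IsZero.iff_id_eq_zero]
    exact biproduct.hom_ext _ _ fun j => j.elim0
  have hm0 : Mono (0 : (⨁ fun i : Fin 0 => ((Fin.elim0 : Fin 0 → SpectralObj A) i).1) ⟶ M) :=
    Preadditive.mono_of_cancel_zero _ fun g _ => hz0.eq_zero_of_tgt g
  have hne : 𝒯.Nonempty := ⟨_, 0, Fin.elim0, 0, hm0, rfl⟩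
  obtain ⟨N, hN, hmax⟩ := (haveI := hM; wellFounded_gt (α := Subobject M)).has_min 𝒯 hne
  obtain ⟨k, P, ι, hι, rfl⟩ := hN
  haveI := hι
  have key : ass A M ⊆ ⋃ i : Fin k, {pt A (P i)} := by
    rintro x ⟨Q, rfl, g, hg⟩
    haveI := hg
    by_cases hz : IsZero (pullback ι g)
    · exfalso
      have hmd : Mono (biprod.desc ι g) := mono_biprod_desc_of_isZero_pullback ι g hι hg hz
      set P' : Fin (k + 1) → SpectralObj A := Fin.snoc P Q with hP'
      have hcs : (fun i : Fin k => (P' i.castSucc).1) = fun i => (P i).1 := by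
        funext i; simp [hP']
      have hlast : (P' (Fin.last k)).1 = Q.1 := by simp [hP']
      let e : (⨁ fun i => (P' i).1) ≅ (⨁ fun i => (P i).1) ⊞ Q.1 :=
        (biproductFinSuccIso k fun i => (P' i).1).trans (eqToIso (by rw [hcs, hlast]))
      let ι' : (⨁ fun i => (P' i).1) ⟶ M := e.hom ≫ biprod.desc ι g
      haveI hm' : Mono ι' := mono_comp _ _
      have hmk : Subobject.mk ι' = Subobject.mk (biprod.desc ι g) :=
        Subobject.mk_eq_mk_of_comm _ _ e rfl
      have hlt : Subobject.mk ι < Subobject.mk ι' := by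
        rw [hmk]; exact mk_lt_mk_desc ι g hι Q.2.1 hmd
      exact hmax _ ⟨k + 1, P', ι', hm', rfl⟩ hlt
    · obtain ⟨hspec, hequiv⟩ := isSpectral_of_mono Q.2 (pullback.snd ι g) inferInstance hz
      have hx : pt A Q ∈ ass A (⨁ fun i => (P i).1) :=
        ⟨⟨_, hspec⟩, Quot.sound hequiv, pullback.fst ι g, inferInstance⟩
      obtain ⟨i, hi⟩ := Set.mem_iUnion.mp (ass_fin_biproduct_subset k _ hx)
      exact Set.mem_iUnion.mpr ⟨i, ass_spectral_subset (P i) hi⟩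
  exact Set.Finite.subset (Set.finite_iUnion fun i => Set.finite_singleton _) key

end RosenbergSpec
end
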